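/- L^p continuity of the analysis mean map: let Q ≥ 0 a.s. and X be random, P ≥ 0 and Y constant, R > 0, c = |H|²|R^{-1}|. Then for 1 ≤ p < ∞, ‖B(X,Q) − B(Y,P)‖_p ≤ ‖X−Y‖_p + c‖Q‖_{2p}‖X−Y‖_{2p} + ‖Q−P‖_p |H||R^{-1}|(1+c|P|)|d−HY|, where B(X,Q) = X + Q H*(H Q H* + R)^{-1}(d − HX). -/

import Mathlib

open MeasureTheory ContinuousLinearMap RealInnerProductSpace

variable {V W : Type*} [NormedAddCommGroup V] [InnerProductSpace ℝ V] [CompleteSpace V]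
  [NormedAddCommGroup W] [InnerProductSpace ℝ W] [CompleteSpace W]

open scoped ENNReal NNReal

/-- The Kalman gain operator `K(Q) = Q H* (H Q H* + R)⁻¹`. -/
noncomputable def kalmanGain (H : V →L[ℝ] W) (R : W →L[ℝ] W) (Q : V →L[ℝ] V) : W →L[ℝ] V :=
  (Q ∘L ContinuousLinearMap.adjoint H) ∘L
    Ring.inverse (H ∘L Q ∘L ContinuousLinearMap.adjoint H + R)

/-- The analysis mean map `B(X,Q) = X + K(Q)(d − H X)`. -/
noncomputable def analysisMean (H : V →L[ℝ] W) (R : W →L[ℝ] W) (d : W)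
    (X : V) (Q : V →L[ℝ] V) : V :=
  X + kalmanGain H R Q (d - H X)

/-- Cauchy–Schwarz for a positive operator. -/
lemma isPositive_inner_sq_le {A : W →L[ℝ] W} (hA : A.IsPositive) (x y : W) :
    ⟪A x, y⟫ ^ 2 ≤ ⟪A x, x⟫ * ⟪A y, y⟫ := by
  have hadj : ContinuousLinearMap.adjoint A = A :=
    (ContinuousLinearMap.isSelfAdjoint_iff' ).mp hA.isSelfAdjoint
  have hsym : ∀ a b : W, ⟪A a, b⟫ = ⟪a, A b⟫ := by
    intro a b
    conv_lhs => rw [← hadj]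
    exact ContinuousLinearMap.adjoint_inner_left A b a
  have hnn : ∀ z : W, 0 ≤ ⟪A z, z⟫ := by
    intro z; simpa using hA.inner_nonneg_left z
  have key : ∀ t : ℝ, 0 ≤ ⟪A y, y⟫ * (t * t) + (2 * ⟪A x, y⟫) * t + ⟪A x, x⟫ := by
    intro t
    have h0 : 0 ≤ ⟪A (x + t • y), x + t • y⟫ := hnn _
    have hyx : ⟪A y, x⟫ = ⟪A x, y⟫ := by
      rw [hsym y x, real_inner_comm]
    simp only [map_add, _root_.map_smul, inner_add_left, inner_add_right,
      real_inner_smul_left, real_inner_smul_right] at h0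
    rw [hyx] at h0
    nlinarith [h0]
  have hdisc := discrim_le_zero key
  rw [discrim] at hdisc
  nlinarith [hdisc]

lemma isUnit_of_coercive {S : W →L[ℝ] W} {α : ℝ} (hα : 0 < α)
    (h : ∀ u : W, α * ‖u‖ ^ 2 ≤ ⟪S u, u⟫) : IsUnit S := by
  refine isUnit_of_forall_le_norm_inner_map S (c := ⟨α, hα.le⟩) (by exact_mod_cast hα) ?_
  intro x
  have h1 := h x
  have h2 : (⟪S x, x⟫ : ℝ) ≤ ‖(⟪S x, x⟫ : ℝ)‖ := le_abs_self _
  calc ‖x‖ ^ 2 * (⟨α, hα.le⟩ : NNReal) = α * ‖x‖ ^ 2 := by push_cast; ring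
    _ ≤ ⟪S x, x⟫ := h1
    _ ≤ ‖(⟪S x, x⟫ : ℝ)‖ := h2

lemma norm_inverse_add_le {R A : W →L[ℝ] W} (hA : A.IsPositive) (hRsym : IsSelfAdjoint R)
    {α : ℝ} (hα : 0 < α) (hR : ∀ u : W, α * ‖u‖ ^ 2 ≤ ⟪R u, u⟫) :
    IsUnit (A + R) ∧ ‖Ring.inverse (A + R)‖ ≤ ‖Ring.inverse R‖ := by
  have hAnn : ∀ z : W, 0 ≤ ⟪A z, z⟫ := fun z => by simpa using hA.inner_nonneg_left z
  have hRu : IsUnit R := isUnit_of_coercive hα hR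
  have hScoer : ∀ u : W, α * ‖u‖ ^ 2 ≤ ⟪(A + R) u, u⟫ := by
    intro u
    have := hAnn u
    have := hR u
    simp only [ContinuousLinearMap.add_apply, inner_add_left]
    linarith
  have hSu : IsUnit (A + R) := isUnit_of_coercive hα hScoer
  refine ⟨hSu, ?_⟩
  set T := Ring.inverse R with hT
  set iS := Ring.inverse (A + R) with hiS
  have hRpos : R.IsPositive := ⟨hRsym.isSymmetric, fun x => by
    have hx1 := hR x
    have hx2 : (0:ℝ) ≤ α * ‖x‖ ^ 2 := by positivity
    simpa [ContinuousLinearMap.reApplyInnerSelf] using le_trans hx2 hx1⟩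
  have hadjR : ContinuousLinearMap.adjoint R = R :=
    (ContinuousLinearMap.isSelfAdjoint_iff').mp hRsym
  have hsymR : ∀ a b : W, ⟪R a, b⟫ = ⟪a, R b⟫ := by
    intro a b
    conv_lhs => rw [← hadjR]
    exact ContinuousLinearMap.adjoint_inner_left R b a
  have hRT : ∀ v : W, R (T v) = v := by
    intro v
    have : R * T = 1 := Ring.mul_inverse_cancel R hRu
    calc R (T v) = (R * T) v := rfl
      _ = v := by rw [this]; rfl
  have step1 : ∀ v : W, ‖v‖ ^ 2 ≤ ‖T‖ * ⟪R v, v⟫ := by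
    intro v
    rcases eq_or_ne v 0 with rfl | hv
    · simp
    have hcs := isPositive_inner_sq_le hRpos v (T v)
    have h1 : ⟪R v, T v⟫ = ‖v‖ ^ 2 := by
      rw [hsymR, hRT, real_inner_self_eq_norm_sq]
    have h2 : ⟪R (T v), T v⟫ ≤ ‖T‖ * ‖v‖ ^ 2 := by
      rw [hRT]
      calc ⟪v, T v⟫ ≤ ‖v‖ * ‖T v‖ := real_inner_le_norm v (T v)
        _ ≤ ‖v‖ * (‖T‖ * ‖v‖) := by
            have hop : ‖T v‖ ≤ ‖T‖ * ‖v‖ := T.le_opNorm v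
            nlinarith [norm_nonneg v, hop]
        _ = ‖T‖ * ‖v‖ ^ 2 := by ring
    have hRvv : 0 ≤ ⟪R v, v⟫ := by
      have h4 := hR v
      have h3 : (0:ℝ) ≤ α * ‖v‖ ^ 2 := by positivity
      linarith
    have hvpos : 0 < ‖v‖ := norm_pos_iff.mpr hv
    rw [h1] at hcs
    have h5 : ⟪R v, v⟫ * ⟪R (T v), T v⟫ ≤ ⟪R v, v⟫ * (‖T‖ * ‖v‖ ^ 2) :=
      mul_le_mul_of_nonneg_left h2 hRvv
    nlinarith [hcs.trans h5, hvpos, mul_pos hvpos hvpos]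
  have step2 : ∀ u : W, ‖iS u‖ ≤ ‖T‖ * ‖u‖ := by
    intro u
    have hSiS : ∀ v : W, (A + R) (iS v) = v := by
      intro v
      have : (A + R) * iS = 1 := Ring.mul_inverse_cancel _ hSu
      calc (A + R) (iS v) = ((A + R) * iS) v := rfl
        _ = v := by rw [this]; rfl
    set w := iS u with hw
    have h1 : ‖w‖ ^ 2 ≤ ‖T‖ * ⟪R w, w⟫ := step1 w
    have h2 : ⟪R w, w⟫ ≤ ⟪(A + R) w, w⟫ := by
      have := hAnn w
      simp only [ContinuousLinearMap.add_apply, inner_add_left]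
      linarith
    have h3 : ⟪(A + R) w, w⟫ ≤ ‖u‖ * ‖w‖ := by
      rw [hSiS]; exact real_inner_le_norm u w
    rcases le_or_gt ‖w‖ 0 with hw0 | hw0
    · have : ‖w‖ = 0 := le_antisymm hw0 (norm_nonneg _)
      rw [this]; positivity
    · nlinarith [norm_nonneg T, h1, h2, h3]
  exact (Ring.inverse (A + R)).opNorm_le_bound (norm_nonneg T) step2

lemma analysisMean_diff_le (H : V →L[ℝ] W) (R : W →L[ℝ] W) (d : W) (Y x : V) (P Q : V →L[ℝ] V)
    (hP : P.IsPositive) (hQ : Q.IsPositive) (hRsym : IsSelfAdjoint R)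
    (hRpos : ∃ α : ℝ, 0 < α ∧ ∀ u : W, α * ‖u‖ ^ 2 ≤ ⟪R u, u⟫) :
    ‖analysisMean H R d x Q - analysisMean H R d Y P‖ ≤
      ‖x - Y‖ + (‖H‖ ^ 2 * ‖(Ring.inverse R : W →L[ℝ] W)‖) * (‖Q‖ * ‖x - Y‖)
        + (‖H‖ * ‖(Ring.inverse R : W →L[ℝ] W)‖ *
            (1 + (‖H‖ ^ 2 * ‖(Ring.inverse R : W →L[ℝ] W)‖) * ‖P‖) * ‖d - H Y‖) * ‖Q - P‖ := by
  obtain ⟨α, hα, hR⟩ := hRpos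
  set H' := ContinuousLinearMap.adjoint H with hH'def
  set T := Ring.inverse R with hTdef
  set SQ := H ∘L Q ∘L H' + R with hSQdef
  set SP := H ∘L P ∘L H' + R with hSPdef
  have hAQ : (H ∘L Q ∘L H').IsPositive := hQ.conj_adjoint H
  have hAP : (H ∘L P ∘L H').IsPositive := hP.conj_adjoint H
  obtain ⟨hQu, hiQn⟩ := norm_inverse_add_le hAQ hRsym hα hR
  obtain ⟨hPu, hiPn⟩ := norm_inverse_add_le hAP hRsym hα hR
  set iQ := Ring.inverse SQ with hiQdef
  set iP := Ring.inverse SP with hiPdef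
  have hKQ : kalmanGain H R Q = (Q ∘L H') ∘L iQ := rfl
  have hKP : kalmanGain H R P = (P ∘L H') ∘L iP := rfl
  have hH' : ‖H'‖ = ‖H‖ := LinearIsometryEquiv.norm_map ContinuousLinearMap.adjoint H
  -- the main identity
  have hid : analysisMean H R d x Q - analysisMean H R d Y P
      = (x - Y) - kalmanGain H R Q (H x - H Y)
        + (kalmanGain H R Q - kalmanGain H R P) (d - H Y) := by
    have e1 : d - H x = (d - H Y) - (H x - H Y) := by abel
    simp only [analysisMean, e1, map_sub, ContinuousLinearMap.sub_apply]
    abel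
  -- bound on ‖kalmanGain H R Q‖
  have hKQn : ‖kalmanGain H R Q‖ ≤ ‖Q‖ * ‖H‖ * ‖T‖ := by
    rw [hKQ]
    calc ‖(Q ∘L H') ∘L iQ‖ ≤ ‖Q ∘L H'‖ * ‖iQ‖ := opNorm_comp_le _ _
      _ ≤ (‖Q‖ * ‖H‖) * ‖T‖ := by
          apply mul_le_mul _ hiQn (norm_nonneg _) (by positivity)
          calc ‖Q ∘L H'‖ ≤ ‖Q‖ * ‖H'‖ := opNorm_comp_le _ _
            _ = ‖Q‖ * ‖H‖ := by rw [hH']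
      _ = ‖Q‖ * ‖H‖ * ‖T‖ := by ring
  -- bound on the gain difference
  have hiQP : iQ - iP = iQ * (SP - SQ) * iP := by
    have h1 : iQ * (SP - SQ) * iP = iQ * (SP * iP) - (iQ * SQ) * iP := by noncomm_ring
    rw [h1, Ring.mul_inverse_cancel _ hPu, Ring.inverse_mul_cancel _ hQu, mul_one, one_mul]
  have hSPQ : SP - SQ = H ∘L ((P - Q) ∘L H') := by
    rw [hSPdef, hSQdef]
    simp only [ContinuousLinearMap.sub_comp, ContinuousLinearMap.comp_sub]
    abel
  have hSPQn : ‖SP - SQ‖ ≤ ‖H‖ * (‖Q - P‖ * ‖H‖) := by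
    rw [hSPQ]
    calc ‖H ∘L ((P - Q) ∘L H')‖ ≤ ‖H‖ * ‖(P - Q) ∘L H'‖ := opNorm_comp_le _ _
      _ ≤ ‖H‖ * (‖P - Q‖ * ‖H'‖) := by
          apply mul_le_mul_of_nonneg_left (opNorm_comp_le _ _) (norm_nonneg _)
      _ = ‖H‖ * (‖Q - P‖ * ‖H‖) := by rw [hH', norm_sub_rev]
  have hiQPn : ‖iQ - iP‖ ≤ ‖T‖ * (‖H‖ * (‖Q - P‖ * ‖H‖)) * ‖T‖ := by
    rw [hiQP]
    calc ‖iQ * (SP - SQ) * iP‖ ≤ ‖iQ * (SP - SQ)‖ * ‖iP‖ := norm_mul_le _ _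
      _ ≤ ‖iQ‖ * ‖SP - SQ‖ * ‖iP‖ :=
          mul_le_mul_of_nonneg_right (norm_mul_le _ _) (norm_nonneg _)
      _ ≤ ‖T‖ * (‖H‖ * (‖Q - P‖ * ‖H‖)) * ‖T‖ :=
          mul_le_mul (mul_le_mul hiQn hSPQn (norm_nonneg _) (norm_nonneg _)) hiPn
            (norm_nonneg _) (by positivity)
  have hKid : kalmanGain H R Q - kalmanGain H R P
      = ((Q - P) ∘L H') ∘L iQ + (P ∘L H') ∘L (iQ - iP) := by
    rw [hKQ, hKP]
    simp only [ContinuousLinearMap.sub_comp, ContinuousLinearMap.comp_sub]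
    abel
  have hKdn : ‖kalmanGain H R Q - kalmanGain H R P‖
      ≤ ‖Q - P‖ * ‖H‖ * ‖T‖ + (‖P‖ * ‖H‖) * (‖T‖ * (‖H‖ * (‖Q - P‖ * ‖H‖)) * ‖T‖) := by
    rw [hKid]
    have b1 : ‖((Q - P) ∘L H') ∘L iQ‖ ≤ ‖Q - P‖ * ‖H‖ * ‖T‖ := by
      calc ‖((Q - P) ∘L H') ∘L iQ‖ ≤ ‖(Q - P) ∘L H'‖ * ‖iQ‖ := opNorm_comp_le _ _
        _ ≤ (‖Q - P‖ * ‖H‖) * ‖T‖ := by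
            apply mul_le_mul _ hiQn (norm_nonneg _) (by positivity)
            calc ‖(Q - P) ∘L H'‖ ≤ ‖Q - P‖ * ‖H'‖ := opNorm_comp_le _ _
              _ = ‖Q - P‖ * ‖H‖ := by rw [hH']
        _ = ‖Q - P‖ * ‖H‖ * ‖T‖ := by ring
    have b2 : ‖(P ∘L H') ∘L (iQ - iP)‖
        ≤ (‖P‖ * ‖H‖) * (‖T‖ * (‖H‖ * (‖Q - P‖ * ‖H‖)) * ‖T‖) := by
      calc ‖(P ∘L H') ∘L (iQ - iP)‖ ≤ ‖P ∘L H'‖ * ‖iQ - iP‖ := opNorm_comp_le _ _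
        _ ≤ (‖P‖ * ‖H‖) * (‖T‖ * (‖H‖ * (‖Q - P‖ * ‖H‖)) * ‖T‖) := by
            apply mul_le_mul _ hiQPn (norm_nonneg _) (by positivity)
            calc ‖P ∘L H'‖ ≤ ‖P‖ * ‖H'‖ := opNorm_comp_le _ _
              _ = ‖P‖ * ‖H‖ := by rw [hH']
    calc ‖_ + _‖ ≤ ‖((Q - P) ∘L H') ∘L iQ‖ + ‖(P ∘L H') ∘L (iQ - iP)‖ := norm_add_le _ _
      _ ≤ _ := add_le_add b1 b2
  -- put the three pieces together
  rw [hid]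
  have n1 : ‖(x - Y) - kalmanGain H R Q (H x - H Y)
        + (kalmanGain H R Q - kalmanGain H R P) (d - H Y)‖
      ≤ ‖x - Y‖ + ‖kalmanGain H R Q (H x - H Y)‖
        + ‖(kalmanGain H R Q - kalmanGain H R P) (d - H Y)‖ := by
    calc ‖_ + _‖ ≤ ‖(x - Y) - kalmanGain H R Q (H x - H Y)‖
          + ‖(kalmanGain H R Q - kalmanGain H R P) (d - H Y)‖ := norm_add_le _ _
      _ ≤ _ := by
          have := norm_sub_le (x - Y) (kalmanGain H R Q (H x - H Y))
          linarith
  have n2 : ‖kalmanGain H R Q (H x - H Y)‖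
      ≤ (‖H‖ ^ 2 * ‖T‖) * (‖Q‖ * ‖x - Y‖) := by
    have e2 : H x - H Y = H (x - Y) := (map_sub H x Y).symm
    calc ‖kalmanGain H R Q (H x - H Y)‖
        ≤ ‖kalmanGain H R Q‖ * ‖H x - H Y‖ := le_opNorm _ _
      _ ≤ (‖Q‖ * ‖H‖ * ‖T‖) * (‖H‖ * ‖x - Y‖) := by
          apply mul_le_mul hKQn _ (norm_nonneg _) (by positivity)
          rw [e2]; exact le_opNorm H (x - Y)
      _ = (‖H‖ ^ 2 * ‖T‖) * (‖Q‖ * ‖x - Y‖) := by ring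
  have n3 : ‖(kalmanGain H R Q - kalmanGain H R P) (d - H Y)‖
      ≤ (‖H‖ * ‖T‖ * (1 + (‖H‖ ^ 2 * ‖T‖) * ‖P‖) * ‖d - H Y‖) * ‖Q - P‖ := by
    calc ‖(kalmanGain H R Q - kalmanGain H R P) (d - H Y)‖
        ≤ ‖kalmanGain H R Q - kalmanGain H R P‖ * ‖d - H Y‖ := le_opNorm _ _
      _ ≤ (‖Q - P‖ * ‖H‖ * ‖T‖ + (‖P‖ * ‖H‖) * (‖T‖ * (‖H‖ * (‖Q - P‖ * ‖H‖)) * ‖T‖))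
            * ‖d - H Y‖ := mul_le_mul_of_nonneg_right hKdn (norm_nonneg _)
      _ = (‖H‖ * ‖T‖ * (1 + (‖H‖ ^ 2 * ‖T‖) * ‖P‖) * ‖d - H Y‖) * ‖Q - P‖ := by ring
  linarith

/-- `Lᵖ` continuity of the analysis mean map: if `Q ≥ 0` a.s. and `X` are random,
`P ≥ 0` and `Y` constant, `R > 0`, and `c = |H|²|R⁻¹|`, then
`‖B(X,Q) − B(Y,P)‖_p ≤ ‖X−Y‖_p + c‖Q‖_{2p}‖X−Y‖_{2p}
  + ‖Q−P‖_p |H||R⁻¹|(1+c|P|)|d−HY|`. -/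
theorem lp_analysisMean_continuity
    {Ωs : Type*} [MeasurableSpace Ωs] (μ : Measure Ωs) [IsProbabilityMeasure μ]
    (H : V →L[ℝ] W) (R : W →L[ℝ] W) (d : W) (Y : V) (P : V →L[ℝ] V)
    (X : Ωs → V) (Q : Ωs → V →L[ℝ] V)
    (hP : P.IsPositive) (hQpos : ∀ᵐ ω ∂μ, (Q ω).IsPositive)
    (hRsym : IsSelfAdjoint R)
    (hRpos : ∃ α : ℝ, 0 < α ∧ ∀ u : W, α * ‖u‖ ^ 2 ≤ ⟪R u, u⟫)
    (p : ℝ) (hp : 1 ≤ p)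
    (hQmom : MemLp Q (ENNReal.ofReal (2 * p)) μ)
    (hXmom : MemLp X (ENNReal.ofReal (2 * p)) μ) :
    (∫ ω, ‖analysisMean H R d (X ω) (Q ω) - analysisMean H R d Y P‖ ^ p ∂μ) ^ (1 / p)
      ≤ (∫ ω, ‖X ω - Y‖ ^ p ∂μ) ^ (1 / p)
        + (‖H‖ ^ 2 * ‖(Ring.inverse R : W →L[ℝ] W)‖) *
          (∫ ω, ‖Q ω‖ ^ (2 * p) ∂μ) ^ (1 / (2 * p)) *
          (∫ ω, ‖X ω - Y‖ ^ (2 * p) ∂μ) ^ (1 / (2 * p))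
        + (∫ ω, ‖Q ω - P‖ ^ p ∂μ) ^ (1 / p) * ‖H‖ * ‖(Ring.inverse R : W →L[ℝ] W)‖ *
          (1 + (‖H‖ ^ 2 * ‖(Ring.inverse R : W →L[ℝ] W)‖) * ‖P‖) * ‖d - H Y‖ := by
  have hp0 : 0 < p := lt_of_lt_of_le one_pos hp
  set T : W →L[ℝ] W := Ring.inverse R with hT
  set c1 : ℝ := ‖H‖ ^ 2 * ‖T‖ with hc1
  set C3 : ℝ := ‖H‖ * ‖T‖ * (1 + c1 * ‖P‖) * ‖d - H Y‖ with hC3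
  have hc1n : 0 ≤ c1 := by positivity
  have hC3n : 0 ≤ C3 := by positivity
  set f : Ωs → ℝ := fun ω => ‖X ω - Y‖ with hfdef
  set φ : Ωs → ℝ := fun ω => ‖Q ω‖ with hφdef
  set h3 : Ωs → ℝ := fun ω => ‖Q ω - P‖ with hh3def
  set pE := ENNReal.ofReal p with hpE
  set p2E := ENNReal.ofReal (2 * p) with hp2E
  have hpE0 : pE ≠ 0 := (ENNReal.ofReal_pos.mpr hp0).ne'
  have hpEtop : pE ≠ ⊤ := ENNReal.ofReal_ne_top
  have hp2E0 : p2E ≠ 0 := (ENNReal.ofReal_pos.mpr (by linarith)).ne'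
  have hp2Etop : p2E ≠ ⊤ := ENNReal.ofReal_ne_top
  have hptr : pE.toReal = p := ENNReal.toReal_ofReal hp0.le
  have hp2tr : p2E.toReal = 2 * p := ENNReal.toReal_ofReal (by linarith)
  have hple : pE ≤ p2E := ENNReal.ofReal_le_ofReal (by linarith)
  have h1pE : 1 ≤ pE := ENNReal.one_le_ofReal.mpr hp
  -- conjugate exponent relation
  have hr : 1 / pE = 1 / p2E + 1 / p2E := by
    have h2p : p2E = 2 * pE := by
      rw [hp2E, hpE, ENNReal.ofReal_mul (by norm_num : (0:ℝ) ≤ 2)]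
      norm_num
    rw [h2p, one_div, one_div, ENNReal.mul_inv (Or.inl (by norm_num)) (Or.inl (by norm_num)),
      ← add_mul, ENNReal.inv_two_add_inv_two, one_mul]
  -- membership facts
  have hXY2p : MemLp (fun ω => X ω - Y) p2E μ := hXmom.sub (memLp_const Y)
  have hf2p : MemLp f p2E μ := hXY2p.norm
  have hfp : MemLp f pE μ := hf2p.mono_exponent hple
  have hφ2p : MemLp φ p2E μ := hQmom.norm
  have hQP2p : MemLp (fun ω => Q ω - P) p2E μ := hQmom.sub (memLp_const P)
  have hh3p : MemLp h3 pE μ := hQP2p.norm.mono_exponent hple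
  have hψ : MemLp (φ • f) pE μ := hf2p.smul hφ2p (hpqr := ⟨by simpa only [one_div] using hr.symm⟩)
  set g : Ωs → ℝ := f + c1 • (φ • f) + C3 • h3 with hgdef
  have hg : MemLp g pE μ := (hfp.add (hψ.const_smul c1)).add (hh3p.const_smul C3)
  have hgapp : ∀ ω, g ω = f ω + c1 * (φ ω * f ω) + C3 * h3 ω := fun ω => rfl
  have hgnn : ∀ ω, 0 ≤ g ω := by
    intro ω
    rw [hgapp]
    have : 0 ≤ f ω := norm_nonneg _
    have : 0 ≤ φ ω := norm_nonneg _
    have : 0 ≤ h3 ω := norm_nonneg _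
    positivity
  -- pointwise a.e. bound
  have hpt : ∀ᵐ ω ∂μ, ‖analysisMean H R d (X ω) (Q ω) - analysisMean H R d Y P‖ ≤ g ω := by
    filter_upwards [hQpos] with ω hω
    rw [hgapp]
    exact analysisMean_diff_le H R d Y (X ω) P (Q ω) hP hω hRsym hRpos
  -- step A : compare integrals
  have hIg : Integrable (fun ω => ‖g ω‖ ^ p) μ := by
    have := hg.integrable_norm_rpow hpE0 hpEtop
    rwa [hptr] at this
  have IntA : (∫ ω, ‖analysisMean H R d (X ω) (Q ω) - analysisMean H R d Y P‖ ^ p ∂μ)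
      ≤ ∫ ω, ‖g ω‖ ^ p ∂μ := by
    refine integral_mono_of_nonneg (ae_of_all _ fun ω => by positivity) hIg ?_
    filter_upwards [hpt] with ω hω
    exact Real.rpow_le_rpow (norm_nonneg _) (hω.trans (le_abs_self _)) hp0.le
  have stepA : (∫ ω, ‖analysisMean H R d (X ω) (Q ω) - analysisMean H R d Y P‖ ^ p ∂μ) ^ (1 / p)
      ≤ (∫ ω, ‖g ω‖ ^ p ∂μ) ^ (1 / p) :=
    Real.rpow_le_rpow (integral_nonneg fun ω => by positivity) IntA (by positivity)
  -- step B : identify with eLpNorm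
  have hBg : (∫ ω, ‖g ω‖ ^ p ∂μ) ^ (1 / p) = (eLpNorm g pE μ).toReal := by
    rw [hg.eLpNorm_eq_integral_rpow_norm hpE0 hpEtop, hptr,
      ENNReal.toReal_ofReal (by positivity), one_div]
  -- real quantities
  set t1 : ℝ := (∫ ω, ‖X ω - Y‖ ^ p ∂μ) ^ (1 / p) with ht1
  set ta : ℝ := (∫ ω, ‖Q ω‖ ^ (2 * p) ∂μ) ^ (1 / (2 * p)) with hta
  set tb : ℝ := (∫ ω, ‖X ω - Y‖ ^ (2 * p) ∂μ) ^ (1 / (2 * p)) with htb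
  set t3 : ℝ := (∫ ω, ‖Q ω - P‖ ^ p ∂μ) ^ (1 / p) with ht3
  have ht1n : 0 ≤ t1 := Real.rpow_nonneg (integral_nonneg fun ω => by positivity) _
  have htan : 0 ≤ ta := Real.rpow_nonneg (integral_nonneg fun ω => by positivity) _
  have htbn : 0 ≤ tb := Real.rpow_nonneg (integral_nonneg fun ω => by positivity) _
  have ht3n : 0 ≤ t3 := Real.rpow_nonneg (integral_nonneg fun ω => by positivity) _
  -- eLpNorm identifications
  have Nf : eLpNorm f pE μ = ENNReal.ofReal t1 := by
    rw [hfp.eLpNorm_eq_integral_rpow_norm hpE0 hpEtop, hptr, ht1, one_div]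
    congr 1
    refine congrArg (fun z => z ^ p⁻¹) (integral_congr_ae (ae_of_all _ fun ω => ?_))
    simp [hfdef, norm_norm]
  have Nφ : eLpNorm φ p2E μ = ENNReal.ofReal ta := by
    rw [hφ2p.eLpNorm_eq_integral_rpow_norm hp2E0 hp2Etop, hp2tr, hta, one_div]
    congr 1
    refine congrArg (fun z => z ^ (2 * p)⁻¹) (integral_congr_ae (ae_of_all _ fun ω => ?_))
    simp [hφdef, norm_norm]
  have Nf2 : eLpNorm f p2E μ = ENNReal.ofReal tb := by
    rw [hf2p.eLpNorm_eq_integral_rpow_norm hp2E0 hp2Etop, hp2tr, htb, one_div]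
    congr 1
    refine congrArg (fun z => z ^ (2 * p)⁻¹) (integral_congr_ae (ae_of_all _ fun ω => ?_))
    simp [hfdef, norm_norm]
  have Nh3 : eLpNorm h3 pE μ = ENNReal.ofReal t3 := by
    rw [hh3p.eLpNorm_eq_integral_rpow_norm hpE0 hpEtop, hptr, ht3, one_div]
    congr 1
    refine congrArg (fun z => z ^ p⁻¹) (integral_congr_ae (ae_of_all _ fun ω => ?_))
    simp [hh3def, norm_norm]
  -- step C : triangle + Hölder at eLpNorm level
  have hsmul2 : eLpNorm (φ • f) pE μ ≤ ENNReal.ofReal ta * ENNReal.ofReal tb := by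
    rw [← Nφ, ← Nf2]
    exact eLpNorm_smul_le_mul_eLpNorm hf2p.aestronglyMeasurable hφ2p.aestronglyMeasurable
      (hpqr := ⟨by simpa only [one_div] using hr.symm⟩)
  have hcoe1 : ‖c1‖ₑ = ENNReal.ofReal c1 := by
    rw [← ofReal_norm_eq_enorm, Real.norm_of_nonneg hc1n]
  have hcoe3 : ‖C3‖ₑ = ENNReal.ofReal C3 := by
    rw [← ofReal_norm_eq_enorm, Real.norm_of_nonneg hC3n]
  have stepC : eLpNorm g pE μ ≤ ENNReal.ofReal (t1 + c1 * (ta * tb) + C3 * t3) := by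
    calc eLpNorm g pE μ
        ≤ eLpNorm (f + c1 • (φ • f)) pE μ + eLpNorm (C3 • h3) pE μ := by
          rw [hgdef]
          exact eLpNorm_add_le (hfp.add (hψ.const_smul c1)).aestronglyMeasurable
            (hh3p.const_smul C3).aestronglyMeasurable h1pE
      _ ≤ eLpNorm f pE μ + eLpNorm (c1 • (φ • f)) pE μ + eLpNorm (C3 • h3) pE μ := by
          gcongr
          exact eLpNorm_add_le hfp.aestronglyMeasurable
            (hψ.const_smul c1).aestronglyMeasurable h1pE
      _ ≤ ENNReal.ofReal t1 + ENNReal.ofReal c1 * (ENNReal.ofReal ta * ENNReal.ofReal tb)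
            + ENNReal.ofReal C3 * ENNReal.ofReal t3 := by
          refine add_le_add (add_le_add ?_ ?_) ?_
          · rw [Nf]
          · rw [eLpNorm_const_smul, hcoe1]
            exact mul_le_mul_right hsmul2 _
          · rw [eLpNorm_const_smul, hcoe3, Nh3]
      _ = ENNReal.ofReal (t1 + c1 * (ta * tb) + C3 * t3) := by
          have h2n : 0 ≤ c1 * (ta * tb) := mul_nonneg hc1n (mul_nonneg htan htbn)
          have h3n : 0 ≤ C3 * t3 := mul_nonneg hC3n ht3n
          rw [← ENNReal.ofReal_mul htan, ← ENNReal.ofReal_mul hc1n,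
            ← ENNReal.ofReal_mul hC3n, ← ENNReal.ofReal_add ht1n h2n,
            ← ENNReal.ofReal_add (add_nonneg ht1n h2n) h3n]
  -- conclude
  have final : (eLpNorm g pE μ).toReal ≤ t1 + c1 * (ta * tb) + C3 * t3 := by
    have h2n : 0 ≤ c1 * (ta * tb) := mul_nonneg hc1n (mul_nonneg htan htbn)
    have h3n : 0 ≤ C3 * t3 := mul_nonneg hC3n ht3n
    have hmono := ENNReal.toReal_mono ENNReal.ofReal_ne_top stepC
    rwa [ENNReal.toReal_ofReal (add_nonneg (add_nonneg ht1n h2n) h3n)] at hmono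
  calc (∫ ω, ‖analysisMean H R d (X ω) (Q ω) - analysisMean H R d Y P‖ ^ p ∂μ) ^ (1 / p)
      ≤ (∫ ω, ‖g ω‖ ^ p ∂μ) ^ (1 / p) := stepA
    _ = (eLpNorm g pE μ).toReal := hBg
    _ ≤ t1 + c1 * (ta * tb) + C3 * t3 := final
    _ = t1 + c1 * ta * tb + t3 * ‖H‖ * ‖T‖ * (1 + c1 * ‖P‖) * ‖d - H Y‖ := by
        rw [hC3]; ring
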